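/- Let Σ be a signature, C a collection of new constants not occurring in Σ, and Σ_C the signature obtained by adding the constants C to Σ. If φ and ψ are formulas in the language of Σ and φ ⊢_{Σ_C} ψ is derivable in QRC₁ over Σ_C, then φ ⊢_Σ ψ is derivable in QRC₁ over Σ. -/

import Mathlib

/-- A signature: constants and relation symbols with arities (no function symbols). -/
structure Signature where
  Const : Type
  Rel : Type
  arity : Rel → ℕ

/-- Terms: variables (numbered) or constants. -/
inductive Term (Sig : Signature) : Type where
  | var : ℕ → Term Sig
  | const : Sig.Const → Term Sig

/-- Strictly positive formulas of QRC₁. -/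
inductive Formula (Sig : Signature) : Type where
  | top : Formula Sig
  | rel : (S : Sig.Rel) → (Fin (Sig.arity S) → Term Sig) → Formula Sig
  | and : Formula Sig → Formula Sig → Formula Sig
  | dia : Formula Sig → Formula Sig
  | all : ℕ → Formula Sig → Formula Sig

namespace Term

variable {Sig : Signature}

def fv : Term Sig → Set ℕ
  | var x => {x}
  | const _ => ∅

def consts : Term Sig → Set Sig.Const
  | var _ => ∅
  | const c => {c}

def subst (t : Term Sig) (x : ℕ) (u : Term Sig) : Term Sig :=
  match t with
  | var y => if y = x then u else var y
  | const c => const c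

end Term

namespace Formula

variable {Sig : Signature}

/-- Free variables of a formula. -/
def fv : Formula Sig → Set ℕ
  | top => ∅
  | rel _ ts => ⋃ i, (ts i).fv
  | and φ ψ => φ.fv ∪ ψ.fv
  | dia φ => φ.fv
  | all x φ => φ.fv \ {x}

/-- Constants occurring in a formula. -/
def consts : Formula Sig → Set Sig.Const
  | top => ∅
  | rel _ ts => ⋃ i, (ts i).consts
  | and φ ψ => φ.consts ∪ ψ.consts
  | dia φ => φ.consts
  | all _ φ => φ.consts

/-- Simultaneous substitution of the term `u` for the free occurrences of `x`. -/
def subst : Formula Sig → ℕ → Term Sig → Formula Sig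
  | top, _, _ => top
  | rel S ts, x, u => rel S (fun i => (ts i).subst x u)
  | and φ ψ, x, u => and (φ.subst x u) (ψ.subst x u)
  | dia φ, x, u => dia (φ.subst x u)
  | all y φ, x, u => if y = x then all y φ else all y (φ.subst x u)

/-- `t` is free for `x` in `φ`: no free variable of `t` becomes bound in `φ[x/t]`. -/
def freeFor : Formula Sig → ℕ → Term Sig → Prop
  | top, _, _ => True
  | rel _ _, _, _ => True
  | and φ ψ, x, t => φ.freeFor x t ∧ ψ.freeFor x t
  | dia φ, x, t => φ.freeFor x t
  | all y φ, x, t => x ∉ (Formula.all y φ).fv ∨ (y ∉ t.fv ∧ φ.freeFor x t)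

/-- Modal depth. -/
def mdepth : Formula Sig → ℕ
  | top => 0
  | rel _ _ => 0
  | and φ ψ => max φ.mdepth ψ.mdepth
  | dia φ => φ.mdepth + 1
  | all _ φ => φ.mdepth

def size : Formula Sig → ℕ
  | top => 1
  | rel _ _ => 1
  | and φ ψ => φ.size + ψ.size + 1
  | dia φ => φ.size + 1
  | all _ φ => φ.size + 1

theorem size_subst (φ : Formula Sig) (x : ℕ) (t : Term Sig) :
    (φ.subst x t).size = φ.size := by
  induction φ with
  | top => rfl
  | rel S ts => rfl
  | and φ ψ ihφ ihψ => simp [Formula.subst, Formula.size, ihφ, ihψ]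
  | dia φ ih => simp [Formula.subst, Formula.size, ih]
  | all y φ ih =>
      by_cases h : y = x <;> simp [Formula.subst, Formula.size, h, ih]

end Formula

/-- Derivability of sequents `φ ⊢ ψ` in QRC₁. -/
inductive Derives {Sig : Signature} : Formula Sig → Formula Sig → Prop where
  | topIntro (φ : Formula Sig) : Derives φ .top
  | refl (φ : Formula Sig) : Derives φ φ
  | andE₁ (φ ψ : Formula Sig) : Derives (.and φ ψ) φ
  | andE₂ (φ ψ : Formula Sig) : Derives (.and φ ψ) ψ
  | andI {φ ψ χ : Formula Sig} : Derives φ ψ → Derives φ χ → Derives φ (.and ψ χ)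
  | cut {φ ψ χ : Formula Sig} : Derives φ ψ → Derives ψ χ → Derives φ χ
  | nec {φ ψ : Formula Sig} : Derives φ ψ → Derives (.dia φ) (.dia ψ)
  | diaTrans (φ : Formula Sig) : Derives (.dia (.dia φ)) (.dia φ)
  | diaAll (x : ℕ) (φ : Formula Sig) : Derives (.dia (.all x φ)) (.all x (.dia φ))
  | allR {φ ψ : Formula Sig} {x : ℕ} : Derives φ ψ → x ∉ φ.fv → Derives φ (.all x ψ)
  | allL {φ ψ : Formula Sig} {x : ℕ} {t : Term Sig} :
      Derives (φ.subst x t) ψ → φ.freeFor x t → Derives (.all x φ) ψ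
  | termInst {φ ψ : Formula Sig} {x : ℕ} {t : Term Sig} :
      Derives φ ψ → φ.freeFor x t → ψ.freeFor x t →
      Derives (φ.subst x t) (ψ.subst x t)
  | constGen {φ ψ : Formula Sig} {x : ℕ} {c : Sig.Const} :
      Derives (φ.subst x (.const c)) (ψ.subst x (.const c)) →
      c ∉ φ.consts → c ∉ ψ.consts → Derives φ ψ

/-- Extension of a signature by a collection `C` of new constants. -/
def Signature.extend (Sig : Signature) (C : Type) : Signature :=
  ⟨Sig.Const ⊕ C, Sig.Rel, Sig.arity⟩

/-- A term of `Sig` seen as a term of the extended signature. -/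
def Term.lift {Sig : Signature} {C : Type} : Term Sig → Term (Sig.extend C)
  | .var x => .var x
  | .const c => .const (Sum.inl c)

/-- A formula of `Sig` seen as a formula of the extended signature. -/
def Formula.lift {Sig : Signature} {C : Type} : Formula Sig → Formula (Sig.extend C)
  | .top => .top
  | .rel S ts => .rel S (fun i => (ts i).lift)
  | .and φ ψ => .and φ.lift ψ.lift
  | .dia φ => .dia φ.lift
  | .all x φ => .all x φ.lift

/-! ### Relational semantics -/

/-- A relational model (on an underlying frame `⟨W, R, D⟩`):
worlds, accessibility, finite domains, constant and relation interpretations. -/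
structure Model (Sig : Signature) where
  W : Type
  U : Type
  nonempty : Nonempty W
  R : W → W → Prop
  D : W → Set U
  Dfin : ∀ w, (D w).Finite
  I : W → Sig.Const → U
  Imem : ∀ w c, I w c ∈ D w
  J : (w : W) → (S : Sig.Rel) → Set (Fin (Sig.arity S) → U)
  Jmem : ∀ w S f, f ∈ J w S → ∀ i, f i ∈ D w

namespace Model

variable {Sig : Signature}

/-- A `w`-assignment: a map from variables into the domain of `w`. -/
def IsAssignment (M : Model Sig) (w : M.W) (g : ℕ → M.U) : Prop :=
  ∀ n, g n ∈ M.D w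

/-- Value of a term at a world under an assignment. -/
def tval (M : Model Sig) (w : M.W) (g : ℕ → M.U) : Term Sig → M.U
  | .var x => g x
  | .const c => M.I w c

end Model

/-- `Γ`-alternative assignments: they agree on all variables outside `Γ`. -/
def AltOn {U : Type} (Γ : Set ℕ) (g h : ℕ → U) : Prop :=
  ∀ y, y ∉ Γ → g y = h y

/-- Truth at a world under an assignment. -/
def Model.Forces {Sig : Signature} (M : Model Sig) :
    M.W → (ℕ → M.U) → Formula Sig → Prop
  | _, _, .top => True
  | w, g, .rel S ts => (fun i => M.tval w g (ts i)) ∈ M.J w S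
  | w, g, .and φ ψ => M.Forces w g φ ∧ M.Forces w g ψ
  | w, g, .dia φ => ∃ v, M.R w v ∧ M.Forces v g φ
  | w, g, .all x φ =>
      ∀ h : ℕ → M.U, M.IsAssignment w h → AltOn {x} g h → M.Forces w h φ

/-- Adequate models: inclusive, transitive, and concordant. -/
def Model.Adequate {Sig : Signature} (M : Model Sig) : Prop :=
  (∀ w u, M.R w u → M.D w ⊆ M.D u) ∧
  (∀ w u v, M.R w u → M.R u v → M.R w v) ∧
  (∀ w u, M.R w u → ∀ c, M.I w c = M.I u c)

/-- The model `M` restricted at the world `r`. -/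
def Model.restrict {Sig : Signature} (M : Model Sig) (r : M.W) : Model Sig where
  W := {w : M.W // w = r ∨ M.R r w}
  U := M.U
  nonempty := ⟨⟨r, Or.inl rfl⟩⟩
  R w v := M.R w.1 v.1
  D w := M.D w.1
  Dfin w := M.Dfin w.1
  I w c := M.I w.1 c
  Imem w c := M.Imem w.1 c
  J w S := M.J w.1 S
  Jmem w S f h i := M.Jmem w.1 S f h i

/-- The model `M` restricted at `r`, with the interpretation of the constant `c`
set to `d ∈ M_r` at every world. -/
noncomputable def Model.restrictSubst {Sig : Signature} (M : Model Sig) (r : M.W) (c : Sig.Const)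
    (d : M.U) (hd : d ∈ M.D r) (hinc : ∀ w u, M.R w u → M.D w ⊆ M.D u) : Model Sig :=
  { M.restrict r with
    I := fun w c' => @ite _ (c' = c) (Classical.propDecidable _) d (M.I w.1 c')
    Imem := by
      intro w c'
      by_cases h : c' = c
      · simp only [h, if_pos rfl]
        rcases w.2 with h' | h'
        · show d ∈ M.D w.1; rw [h']; exact hd
        · exact hinc r w.1 h' hd
      · refine (congrArg (· ∈ M.D w.1) (if_neg h)).mpr ?_
        exact M.Imem w.1 c' }

/-! ### Pairs, closure, maximal consistency -/

/-- A pair of sets of formulas (positive and negative part). -/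
structure Pair (Sig : Signature) where
  pos : Set (Formula Sig)
  neg : Set (Formula Sig)

/-- `Γ ⊢ φ`: some finite conjunction of members of `Γ` derives `φ`. -/
def SetDerives {Sig : Signature} (Γ : Set (Formula Sig)) (φ : Formula Sig) : Prop :=
  ∃ (γ : Formula Sig) (l : List (Formula Sig)),
    γ ∈ Γ ∧ (∀ δ ∈ l, δ ∈ Γ) ∧ Derives (l.foldl Formula.and γ) φ

namespace Pair

variable {Sig : Signature}

/-- A pair is consistent if no member of the negative part follows from the positive part. -/
def Consistent (p : Pair Sig) : Prop :=
  ∀ δ ∈ p.neg, ¬ SetDerives p.pos δ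

/-- `q` is a `Φ`-extension of `p`. -/
def Ext (p q : Pair Sig) (Φ : Set (Formula Sig)) : Prop :=
  p.pos ⊆ q.pos ∧ q.pos ⊆ Φ ∧ p.neg ⊆ q.neg ∧ q.neg ⊆ Φ

/-- `Φ`-maximal consistency. -/
def MaxCons (p : Pair Sig) (Φ : Set (Formula Sig)) : Prop :=
  p.Consistent ∧ p.pos ⊆ Φ ∧ p.neg ⊆ Φ ∧
    ∀ q : Pair Sig, p.Ext q Φ → q.Consistent → q = p

/-- A pair is fully witnessed if every negative universal has a constant witness. -/
def FullyWitnessed (p : Pair Sig) : Prop :=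
  ∀ (x : ℕ) (φ : Formula Sig), Formula.all x φ ∈ p.neg →
    ∃ c : Sig.Const, φ.subst x (.const c) ∈ p.neg

end Pair

/-- Closure of a formula under a set of constants. -/
def Cl {Sig : Signature} (C : Set Sig.Const) : Formula Sig → Set (Formula Sig)
  | .top => {.top}
  | .rel S ts => {.rel S ts, .top}
  | .and φ ψ => {.and φ ψ} ∪ Cl C φ ∪ Cl C ψ
  | .dia φ => {.dia φ} ∪ Cl C φ
  | .all x φ => {.all x φ} ∪ ⋃ c ∈ C, Cl C (φ.subst x (.const c))
termination_by φ => φ.size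
decreasing_by
  all_goals simp [Formula.size, Formula.size_subst]
  all_goals omega

/-- Closure of a set of formulas under a set of constants. -/
def ClSet {Sig : Signature} (C : Set Sig.Const) (Γ : Set (Formula Sig)) :
    Set (Formula Sig) :=
  ⋃ φ ∈ Γ, Cl C φ

/-- Modal depth of a set of formulas (as a supremum in ℕ). -/
noncomputable def mdepthSet {Sig : Signature} (Γ : Set (Formula Sig)) : ℕ :=
  sSup (Formula.mdepth '' Γ)

/-- The relation `R̂` between pairs. -/
def hatR {Sig : Signature} (p q : Pair Sig) : Prop :=
  (∀ φ : Formula Sig, Formula.dia φ ∈ p.neg → φ ∈ q.neg ∧ Formula.dia φ ∈ q.neg) ∧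
  (∃ ψ : Formula Sig, Formula.dia ψ ∈ p.pos ∧ Formula.dia ψ ∈ q.neg)

/-! ### Auxiliary development for conservativity -/

section Conservativity

variable {Sig : Signature} {C : Type}

/-- All variables (free or bound, including binders) occurring in a formula. -/
def Formula.varsAll {Sig : Signature} : Formula Sig → Set ℕ
  | .top => ∅
  | .rel _ ts => ⋃ i, (ts i).fv
  | .and φ ψ => φ.varsAll ∪ ψ.varsAll
  | .dia φ => φ.varsAll
  | .all x φ => insert x φ.varsAll

theorem Term.fv_finite (t : Term Sig) : t.fv.Finite := by
  cases t
  · exact Set.finite_singleton _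
  · exact Set.finite_empty

theorem Term.consts_finite (t : Term Sig) : t.consts.Finite := by
  cases t
  · exact Set.finite_empty
  · exact Set.finite_singleton _

theorem Formula.varsAll_finite (φ : Formula Sig) : φ.varsAll.Finite := by
  induction φ with
  | top => exact Set.finite_empty
  | rel S ts => exact Set.finite_iUnion fun i => (ts i).fv_finite
  | and φ ψ ih1 ih2 => exact ih1.union ih2
  | dia φ ih => exact ih
  | all x φ ih => exact ih.insert x

theorem Formula.consts_finite (φ : Formula Sig) : φ.consts.Finite := by
  induction φ with
  | top => exact Set.finite_empty
  | rel S ts => exact Set.finite_iUnion fun i => (ts i).consts_finite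
  | and φ ψ ih1 ih2 => exact ih1.union ih2
  | dia φ ih => exact ih
  | all x φ ih => exact ih

theorem Formula.fv_subset_varsAll (φ : Formula Sig) : φ.fv ⊆ φ.varsAll := by
  induction φ with
  | top => exact subset_rfl
  | rel S ts => exact subset_rfl
  | and φ ψ ih1 ih2 => exact Set.union_subset_union ih1 ih2
  | dia φ ih => exact ih
  | all x φ ih => exact fun z hz => Set.mem_insert_of_mem _ (ih hz.1)

theorem Term.subst_of_not_mem_fv {t : Term Sig} {x : ℕ} (u : Term Sig) (h : x ∉ t.fv) :
    t.subst x u = t := by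
  cases t with
  | var y =>
    have : y ≠ x := by simpa [Term.fv, eq_comm] using h
    simp [Term.subst, this]
  | const c => rfl

theorem Formula.subst_of_not_mem_fv {φ : Formula Sig} {x : ℕ} (u : Term Sig) (h : x ∉ φ.fv) :
    φ.subst x u = φ := by
  induction φ with
  | top => rfl
  | rel S ts =>
    simp only [Formula.fv, Set.mem_iUnion, not_exists] at h
    simp only [Formula.subst]
    congr 1
    funext i
    exact Term.subst_of_not_mem_fv u (h i)
  | and φ ψ ih1 ih2 =>
    simp only [Formula.fv, Set.mem_union, not_or] at h
    simp [Formula.subst, ih1 h.1, ih2 h.2]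
  | dia φ ih => simp [Formula.subst, ih h]
  | all y φ ih =>
    by_cases hyx : y = x
    · simp [Formula.subst, hyx]
    · have hx : x ∉ φ.fv := by
        intro hx
        exact h ⟨hx, fun hxy => hyx (by simpa [eq_comm] using hxy)⟩
      simp [Formula.subst, hyx, ih hx]

theorem Term.subst_roundtrip {t : Term Sig} {x y : ℕ} (hy : y ∉ t.fv) :
    (t.subst x (.var y)).subst y (.var x) = t := by
  cases t with
  | var z =>
    have hzy : z ≠ y := by simpa [Term.fv, eq_comm] using hy
    by_cases hz : z = x
    · simp [Term.subst, hz]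
    · simp [Term.subst, hz, hzy]
  | const c => rfl

theorem Formula.subst_roundtrip {φ : Formula Sig} {x y : ℕ} (hy : y ∉ φ.varsAll)
    (hxy : x ≠ y) : (φ.subst x (.var y)).subst y (.var x) = φ := by
  induction φ with
  | top => rfl
  | rel S ts =>
    simp only [Formula.varsAll, Set.mem_iUnion, not_exists] at hy
    simp only [Formula.subst]
    congr 1
    funext i
    exact Term.subst_roundtrip (hy i)
  | and φ ψ ih1 ih2 =>
    simp only [Formula.varsAll, Set.mem_union, not_or] at hy
    simp [Formula.subst, ih1 hy.1, ih2 hy.2]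
  | dia φ ih => simp [Formula.subst, ih hy]
  | all z φ ih =>
    simp only [Formula.varsAll, Set.mem_insert_iff, not_or] at hy
    obtain ⟨hzy, hy'⟩ := hy
    have hzy' : z ≠ y := fun h => hzy h.symm
    by_cases hz : z = x
    · have : φ.subst y (Term.var x) = φ :=
        Formula.subst_of_not_mem_fv _ (fun h => hy' (φ.fv_subset_varsAll h))
      simp [Formula.subst, hz, hzy', this]
    · simp [Formula.subst, hz, hzy', ih hy']

theorem Formula.freeFor_roundtrip {φ : Formula Sig} {x y : ℕ} (hy : y ∉ φ.varsAll)
    (hxy : x ≠ y) : (φ.subst x (.var y)).freeFor y (.var x) := by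
  induction φ with
  | top => trivial
  | rel S ts => trivial
  | and φ ψ ih1 ih2 =>
    simp only [Formula.varsAll, Set.mem_union, not_or] at hy
    exact ⟨ih1 hy.1, ih2 hy.2⟩
  | dia φ ih => exact ih hy
  | all z φ ih =>
    simp only [Formula.varsAll, Set.mem_insert_iff, not_or] at hy
    obtain ⟨hzy, hy'⟩ := hy
    by_cases hz : z = x
    · simp only [Formula.subst, hz, if_pos rfl]
      left
      intro hmem
      exact hy' (φ.fv_subset_varsAll hmem.1)
    · simp only [Formula.subst, hz, if_neg hz]
      right
      refine ⟨?_, ih hy'⟩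
      simp only [Term.fv, Set.mem_singleton_iff]
      exact hz

end Conservativity
section Projection

variable {Sig : Signature} {C : Type}

/-- Project a term of the extended signature back to `Sig`, replacing each new
constant `c` by the variable `σ c`. -/
def Term.projT (σ : C → ℕ) : Term (Sig.extend C) → Term Sig
  | .var x => .var x
  | .const (Sum.inl c) => .const c
  | .const (Sum.inr c) => .var (σ c)

/-- Project a formula of the extended signature back to `Sig`. -/
def Formula.projF (σ : C → ℕ) : Formula (Sig.extend C) → Formula Sig
  | .top => .top
  | .rel S ts => .rel S fun i => (ts i).projT σ
  | .and φ ψ => .and (φ.projF σ) (ψ.projF σ)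
  | .dia φ => .dia (φ.projF σ)
  | .all x φ => .all x (φ.projF σ)

theorem Term.projT_lift (σ : C → ℕ) (t : Term Sig) : (Term.lift t : Term (Sig.extend C)).projT σ = t := by
  cases t <;> rfl

theorem Formula.projF_lift (σ : C → ℕ) (φ : Formula Sig) :
    (Formula.lift φ : Formula (Sig.extend C)).projF σ = φ := by
  induction φ with
  | top => rfl
  | rel S ts =>
    simp only [Formula.lift, Formula.projF]
    congr 1
    funext i
    exact Term.projT_lift σ (ts i)
  | and φ ψ ih1 ih2 => simp [Formula.lift, Formula.projF, ih1, ih2]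
  | dia φ ih => simp [Formula.lift, Formula.projF, ih]
  | all x φ ih => simp [Formula.lift, Formula.projF, ih]

/-- The new constants occurring in a formula of the extended signature. -/
def Formula.newC (φ : Formula (Sig.extend C)) : Set C := {c | Sum.inr c ∈ φ.consts}

theorem Formula.newC_finite (φ : Formula (Sig.extend C)) : φ.newC.Finite :=
  (φ.consts_finite).preimage (Sum.inr_injective.injOn)

theorem Term.projT_subst (σ : C → ℕ) (u t : Term (Sig.extend C)) (x : ℕ)
    (h : ∀ c : C, Sum.inr c ∈ u.consts → σ c ≠ x) :
    (u.subst x t).projT σ = (u.projT σ).subst x (t.projT σ) := by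
  cases u with
  | var y => by_cases hy : y = x <;> simp [Term.subst, Term.projT, hy]
  | const c =>
    cases c with
    | inl c => rfl
    | inr c =>
      have := h c (by simp [Term.consts]; exact Set.mem_singleton _)
      simp [Term.subst, Term.projT, this]

theorem Formula.projF_subst (σ : C → ℕ) (φ : Formula (Sig.extend C)) (x : ℕ)
    (t : Term (Sig.extend C)) (h : ∀ c : C, Sum.inr c ∈ φ.consts → σ c ≠ x) :
    (φ.subst x t).projF σ = (φ.projF σ).subst x (t.projT σ) := by
  induction φ with
  | top => rfl
  | rel S ts =>
    simp only [Formula.subst, Formula.projF]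
    congr 1
    funext i
    refine Term.projT_subst σ (ts i) t x fun c hc => h c ?_
    exact (show _ ∈ ⋃ i, (ts i).consts from Set.mem_iUnion.mpr ⟨i, hc⟩)
  | and φ ψ ih1 ih2 =>
    have h1 : ∀ c : C, Sum.inr c ∈ φ.consts → σ c ≠ x := fun c hc => h c (Or.inl hc)
    have h2 : ∀ c : C, Sum.inr c ∈ ψ.consts → σ c ≠ x := fun c hc => h c (Or.inr hc)
    simp [Formula.subst, Formula.projF, ih1 h1, ih2 h2]
  | dia φ ih => simp [Formula.subst, Formula.projF, ih h]
  | all y φ ih =>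
    by_cases hy : y = x
    · simp [Formula.subst, Formula.projF, hy]
    · simp [Formula.subst, Formula.projF, hy, ih h]

theorem Term.projT_fv {σ : C → ℕ} {t : Term (Sig.extend C)} {z : ℕ}
    (h : z ∈ (t.projT σ).fv) :
    z ∈ t.fv ∨ ∃ c : C, Sum.inr c ∈ t.consts ∧ σ c = z := by
  cases t with
  | var y => exact Or.inl h
  | const c =>
    cases c with
    | inl c => exact absurd h (by simp [Term.projT, Term.fv])
    | inr c =>
      right
      refine ⟨c, by simp [Term.consts]; exact Set.mem_singleton _, ?_⟩
      simpa [Term.projT, Term.fv, eq_comm] using h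

theorem Formula.projF_fv {σ : C → ℕ} {φ : Formula (Sig.extend C)} {z : ℕ}
    (h : z ∈ (φ.projF σ).fv) :
    z ∈ φ.fv ∨ ∃ c : C, Sum.inr c ∈ φ.consts ∧ σ c = z := by
  induction φ with
  | top => exact Or.inl h
  | rel S ts =>
    simp only [Formula.projF, Formula.fv, Set.mem_iUnion] at h
    obtain ⟨i, hi⟩ := h
    rcases Term.projT_fv hi with h1 | ⟨c, hc, hcz⟩
    · exact Or.inl (by simp only [Formula.fv, Set.mem_iUnion]; exact ⟨i, h1⟩)
    · exact Or.inr ⟨c, (show _ ∈ ⋃ i, (ts i).consts from Set.mem_iUnion.mpr ⟨i, hc⟩), hcz⟩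
  | and φ ψ ih1 ih2 =>
    rcases h with h | h
    · rcases ih1 h with h1 | ⟨c, hc, hcz⟩
      · exact Or.inl (Or.inl h1)
      · exact Or.inr ⟨c, Or.inl hc, hcz⟩
    · rcases ih2 h with h1 | ⟨c, hc, hcz⟩
      · exact Or.inl (Or.inr h1)
      · exact Or.inr ⟨c, Or.inr hc, hcz⟩
  | dia φ ih => exact ih h
  | all y φ ih =>
    obtain ⟨h1, h2⟩ := h
    rcases ih h1 with h3 | ⟨c, hc, hcz⟩
    · exact Or.inl ⟨h3, h2⟩
    · exact Or.inr ⟨c, hc, hcz⟩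

theorem Formula.projF_varsAll {σ : C → ℕ} {φ : Formula (Sig.extend C)} {z : ℕ}
    (h : z ∈ (φ.projF σ).varsAll) :
    z ∈ φ.varsAll ∨ ∃ c : C, Sum.inr c ∈ φ.consts ∧ σ c = z := by
  induction φ with
  | top => exact Or.inl h
  | rel S ts =>
    simp only [Formula.projF, Formula.varsAll, Set.mem_iUnion] at h
    obtain ⟨i, hi⟩ := h
    rcases Term.projT_fv hi with h1 | ⟨c, hc, hcz⟩
    · exact Or.inl (by simp only [Formula.varsAll, Set.mem_iUnion]; exact ⟨i, h1⟩)
    · exact Or.inr ⟨c, (show _ ∈ ⋃ i, (ts i).consts from Set.mem_iUnion.mpr ⟨i, hc⟩), hcz⟩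
  | and φ ψ ih1 ih2 =>
    rcases h with h | h
    · rcases ih1 h with h1 | ⟨c, hc, hcz⟩
      · exact Or.inl (Or.inl h1)
      · exact Or.inr ⟨c, Or.inl hc, hcz⟩
    · rcases ih2 h with h1 | ⟨c, hc, hcz⟩
      · exact Or.inl (Or.inr h1)
      · exact Or.inr ⟨c, Or.inr hc, hcz⟩
  | dia φ ih => exact ih h
  | all y φ ih =>
    rcases h with h | h
    · exact Or.inl (Or.inl h)
    · rcases ih h with h1 | ⟨c, hc, hcz⟩
      · exact Or.inl (Or.inr h1)
      · exact Or.inr ⟨c, hc, hcz⟩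

theorem Term.projT_consts {σ : C → ℕ} {t : Term (Sig.extend C)} {c₀ : Sig.Const}
    (h : c₀ ∈ (t.projT σ).consts) : Sum.inl c₀ ∈ t.consts := by
  cases t with
  | var y => exact absurd h (by simp [Term.projT, Term.consts])
  | const c =>
    cases c with
    | inl c =>
      simp only [Term.projT, Term.consts, Set.mem_singleton_iff] at h ⊢
      exact congrArg Sum.inl h
    | inr c => exact absurd h (by simp [Term.projT, Term.consts])

theorem Formula.projF_consts {σ : C → ℕ} {φ : Formula (Sig.extend C)} {c₀ : Sig.Const}
    (h : c₀ ∈ (φ.projF σ).consts) : Sum.inl c₀ ∈ φ.consts := by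
  induction φ with
  | top => exact absurd h (by simp [Formula.projF, Formula.consts])
  | rel S ts =>
    simp only [Formula.projF, Formula.consts, Set.mem_iUnion] at h
    obtain ⟨i, hi⟩ := h
    exact (show _ ∈ ⋃ i, (ts i).consts from Set.mem_iUnion.mpr ⟨i, Term.projT_consts hi⟩)
  | and φ ψ ih1 ih2 =>
    rcases h with h | h
    · exact Or.inl (ih1 h)
    · exact Or.inr (ih2 h)
  | dia φ ih => exact ih h
  | all y φ ih => exact ih h

theorem Formula.projF_freeFor {σ : C → ℕ} {φ : Formula (Sig.extend C)} {x : ℕ}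
    {t : Term (Sig.extend C)} (hff : φ.freeFor x t)
    (h1 : ∀ c : C, Sum.inr c ∈ t.consts → σ c ∉ φ.varsAll)
    (h2 : ∀ c : C, Sum.inr c ∈ φ.consts → σ c ≠ x) :
    (φ.projF σ).freeFor x (t.projT σ) := by
  induction φ with
  | top => trivial
  | rel S ts => trivial
  | and φ ψ ih1 ih2 =>
    exact ⟨ih1 hff.1 (fun c hc hm => h1 c hc (Or.inl hm)) (fun c hc => h2 c (Or.inl hc)),
      ih2 hff.2 (fun c hc hm => h1 c hc (Or.inr hm)) (fun c hc => h2 c (Or.inr hc))⟩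
  | dia φ ih => exact ih hff h1 h2
  | all y φ ih =>
    rcases hff with hl | ⟨hyt, hff'⟩
    · left
      intro hmem
      rcases Formula.projF_fv (φ := Formula.all y φ) hmem with hm | ⟨c, hc, hcx⟩
      · exact hl hm
      · exact h2 c hc hcx
    · right
      refine ⟨?_, ih hff' (fun c hc hm => h1 c hc (Set.mem_insert_of_mem _ hm)) h2⟩
      intro hmem
      rcases Term.projT_fv hmem with hm | ⟨c, hc, hcy⟩
      · exact hyt hm
      · exact h1 c hc (hcy ▸ Set.mem_insert _ _)

theorem Term.consts_subst_subset (u t : Term (Sig.extend C)) (x : ℕ) :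
    (u.subst x t).consts ⊆ u.consts ∪ t.consts := by
  cases u with
  | var y =>
    by_cases hy : y = x
    · simp [Term.subst, hy]
    · simp [Term.subst, hy, Term.consts]
  | const c => simp [Term.subst]

theorem Formula.consts_subst_subset (φ : Formula (Sig.extend C)) (x : ℕ)
    (t : Term (Sig.extend C)) : (φ.subst x t).consts ⊆ φ.consts ∪ t.consts := by
  induction φ with
  | top => simp [Formula.subst, Formula.consts]
  | rel S ts =>
    intro z hz
    simp only [Formula.subst, Formula.consts, Set.mem_iUnion] at hz
    obtain ⟨i, hi⟩ := hz
    rcases Term.consts_subst_subset (ts i) t x hi with h | h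
    · exact Or.inl (by simp only [Formula.consts, Set.mem_iUnion]; exact ⟨i, h⟩)
    · exact Or.inr h
  | and φ ψ ih1 ih2 =>
    intro z hz
    rcases hz with h | h
    · rcases ih1 h with h | h
      · exact Or.inl (Or.inl h)
      · exact Or.inr h
    · rcases ih2 h with h | h
      · exact Or.inl (Or.inr h)
      · exact Or.inr h
  | dia φ ih => exact ih
  | all y φ ih =>
    by_cases hy : y = x
    · simp only [Formula.subst, hy, if_pos rfl]
      exact fun z hz => Or.inl hz
    · simp only [Formula.subst, if_neg hy]
      exact ih

end Projection
section MainLemma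

variable {Sig : Signature} {C : Type}

/-- The new constants occurring in a term of the extended signature. -/
def Term.newCT (t : Term (Sig.extend C)) : Set C := {c | Sum.inr c ∈ t.consts}

theorem Term.newCT_finite (t : Term (Sig.extend C)) : t.newCT.Finite :=
  (t.consts_finite).preimage (Sum.inr_injective.injOn)

theorem Formula.newC_and (φ ψ : Formula (Sig.extend C)) :
    (Formula.and φ ψ).newC = φ.newC ∪ ψ.newC := rfl

theorem Formula.newC_dia (φ : Formula (Sig.extend C)) :
    (Formula.dia φ).newC = φ.newC := rfl

theorem Formula.newC_all (x : ℕ) (φ : Formula (Sig.extend C)) :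
    (Formula.all x φ).newC = φ.newC := rfl

theorem Formula.newC_subst_subset (φ : Formula (Sig.extend C)) (x : ℕ)
    (t : Term (Sig.extend C)) : (φ.subst x t).newC ⊆ φ.newC ∪ t.newCT := by
  intro c hc
  rcases φ.consts_subst_subset x t hc with h | h
  · exact Or.inl h
  · exact Or.inr h

/-- Key lemma: from a derivation over the extended signature we can extract a finite
set of relevant new constants `cs` and a finite set of "used" variables `V` such that
replacing the new constants by sufficiently fresh distinct variables yields a
derivation of the projected sequent over the base signature. -/
theorem Derives.proj {φ ψ : Formula (Sig.extend C)} (h : Derives φ ψ) :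
    ∃ (cs : Set C) (V : Set ℕ), cs.Finite ∧ V.Finite ∧
      φ.newC ∪ ψ.newC ⊆ cs ∧
      ∀ σ : C → ℕ, Set.InjOn σ cs → (∀ c ∈ cs, σ c ∉ V) →
        Derives (φ.projF σ) (ψ.projF σ) := by
  induction h with
  | topIntro φ =>
    exact ⟨φ.newC ∪ (Formula.top).newC, ∅, (φ.newC_finite).union (Formula.newC_finite _),
      Set.finite_empty, subset_rfl, fun σ _ _ => Derives.topIntro _⟩
  | refl φ =>
    exact ⟨φ.newC ∪ φ.newC, ∅, (φ.newC_finite).union φ.newC_finite,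
      Set.finite_empty, subset_rfl, fun σ _ _ => Derives.refl _⟩
  | andE₁ φ ψ =>
    exact ⟨(Formula.and φ ψ).newC ∪ φ.newC, ∅,
      (Formula.newC_finite _).union φ.newC_finite,
      Set.finite_empty, subset_rfl, fun σ _ _ => Derives.andE₁ _ _⟩
  | andE₂ φ ψ =>
    exact ⟨(Formula.and φ ψ).newC ∪ ψ.newC, ∅,
      (Formula.newC_finite _).union ψ.newC_finite,
      Set.finite_empty, subset_rfl, fun σ _ _ => Derives.andE₂ _ _⟩
  | @andI φ ψ χ h1 h2 ih1 ih2 =>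
    obtain ⟨cs1, V1, hf1, hVf1, hsub1, H1⟩ := ih1
    obtain ⟨cs2, V2, hf2, hVf2, hsub2, H2⟩ := ih2
    refine ⟨cs1 ∪ cs2, V1 ∪ V2, hf1.union hf2, hVf1.union hVf2, ?_, ?_⟩
    · rw [Formula.newC_and]
      refine Set.union_subset ?_ (Set.union_subset ?_ ?_)
      · exact fun c hc => Set.mem_union_left _ (hsub1 (Set.mem_union_left _ hc))
      · exact fun c hc => Set.mem_union_left _ (hsub1 (Set.mem_union_right _ hc))
      · exact fun c hc => Set.mem_union_right _ (hsub2 (Set.mem_union_right _ hc))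
    · intro σ hinj havoid
      exact Derives.andI
        (H1 σ (hinj.mono Set.subset_union_left)
          (fun c hc hv => havoid c (Set.mem_union_left _ hc) (Set.mem_union_left _ hv)))
        (H2 σ (hinj.mono Set.subset_union_right)
          (fun c hc hv => havoid c (Set.mem_union_right _ hc) (Set.mem_union_right _ hv)))
  | @cut φ ψ χ h1 h2 ih1 ih2 =>
    obtain ⟨cs1, V1, hf1, hVf1, hsub1, H1⟩ := ih1
    obtain ⟨cs2, V2, hf2, hVf2, hsub2, H2⟩ := ih2
    refine ⟨cs1 ∪ cs2, V1 ∪ V2, hf1.union hf2, hVf1.union hVf2, ?_, ?_⟩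
    · refine Set.union_subset ?_ ?_
      · exact fun c hc => Set.mem_union_left _ (hsub1 (Set.mem_union_left _ hc))
      · exact fun c hc => Set.mem_union_right _ (hsub2 (Set.mem_union_right _ hc))
    · intro σ hinj havoid
      exact Derives.cut
        (H1 σ (hinj.mono Set.subset_union_left)
          (fun c hc hv => havoid c (Set.mem_union_left _ hc) (Set.mem_union_left _ hv)))
        (H2 σ (hinj.mono Set.subset_union_right)
          (fun c hc hv => havoid c (Set.mem_union_right _ hc) (Set.mem_union_right _ hv)))
  | @nec φ ψ h ih =>
    obtain ⟨cs, V, hcsf, hVf, hsub, H⟩ := ih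
    refine ⟨cs, V, hcsf, hVf, ?_, ?_⟩
    · rw [Formula.newC_dia, Formula.newC_dia]; exact hsub
    · exact fun σ hinj havoid => Derives.nec (H σ hinj havoid)
  | diaTrans φ =>
    exact ⟨(Formula.dia (Formula.dia φ)).newC ∪ (Formula.dia φ).newC, ∅,
      (Formula.newC_finite _).union (Formula.newC_finite _),
      Set.finite_empty, subset_rfl, fun σ _ _ => Derives.diaTrans _⟩
  | diaAll x φ =>
    exact ⟨(Formula.dia (Formula.all x φ)).newC ∪ (Formula.all x (Formula.dia φ)).newC, ∅,
      (Formula.newC_finite _).union (Formula.newC_finite _),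
      Set.finite_empty, subset_rfl, fun σ _ _ => Derives.diaAll x _⟩
  | @allR φ ψ x h hx ih =>
    obtain ⟨cs, V, hcsf, hVf, hsub, H⟩ := ih
    refine ⟨cs, V ∪ {x}, hcsf, hVf.union (Set.finite_singleton x), ?_, ?_⟩
    · rw [Formula.newC_all]; exact hsub
    · intro σ hinj havoid
      refine Derives.allR
        (H σ hinj (fun c hc hv => havoid c hc (Set.mem_union_left _ hv))) ?_
      intro hmem
      rcases Formula.projF_fv hmem with h1 | ⟨c, hc, hcx⟩
      · exact hx h1
      · refine havoid c (hsub (Set.mem_union_left _ hc)) ?_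
        rw [hcx]
        exact Set.mem_union_right _ rfl
  | @allL φ ψ x t h hff ih =>
    obtain ⟨cs, V, hcsf, hVf, hsub, H⟩ := ih
    refine ⟨cs ∪ φ.newC ∪ t.newCT, V ∪ φ.varsAll ∪ {x},
      (hcsf.union φ.newC_finite).union t.newCT_finite,
      (hVf.union φ.varsAll_finite).union (Set.finite_singleton x), ?_, ?_⟩
    · rw [Formula.newC_all]
      refine Set.union_subset ?_ ?_
      · exact fun c hc => Set.mem_union_left _ (Set.mem_union_right _ hc)
      · exact fun c hc =>
          Set.mem_union_left _ (Set.mem_union_left _ (hsub (Set.mem_union_right _ hc)))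
    · intro σ hinj havoid
      have hxφ : ∀ c : C, Sum.inr c ∈ φ.consts → σ c ≠ x := by
        intro c hc he
        refine havoid c (Set.mem_union_left _ (Set.mem_union_right _ hc)) ?_
        rw [he]; exact Set.mem_union_right _ rfl
      have hD := H σ (hinj.mono (Set.subset_union_left.trans Set.subset_union_left))
        (fun c hc hv => havoid c (Set.mem_union_left _ (Set.mem_union_left _ hc))
          (Set.mem_union_left _ (Set.mem_union_left _ hv)))
      rw [Formula.projF_subst σ φ x t hxφ] at hD
      refine Derives.allL hD (Formula.projF_freeFor hff ?_ hxφ)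
      intro c hc hm
      exact havoid c (Set.mem_union_right _ hc)
        (Set.mem_union_left _ (Set.mem_union_right _ hm))
  | @termInst φ ψ x t h hff1 hff2 ih =>
    obtain ⟨cs, V, hcsf, hVf, hsub, H⟩ := ih
    refine ⟨cs ∪ t.newCT, V ∪ φ.varsAll ∪ ψ.varsAll ∪ {x},
      hcsf.union t.newCT_finite,
      ((hVf.union φ.varsAll_finite).union ψ.varsAll_finite).union (Set.finite_singleton x),
      ?_, ?_⟩
    · refine Set.union_subset ?_ ?_
      · intro c hc
        rcases φ.newC_subst_subset x t hc with h1 | h1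
        · exact Set.mem_union_left _ (hsub (Set.mem_union_left _ h1))
        · exact Set.mem_union_right _ h1
      · intro c hc
        rcases ψ.newC_subst_subset x t hc with h1 | h1
        · exact Set.mem_union_left _ (hsub (Set.mem_union_right _ h1))
        · exact Set.mem_union_right _ h1
    · intro σ hinj havoid
      have hxφ : ∀ c : C, Sum.inr c ∈ φ.consts → σ c ≠ x := by
        intro c hc he
        refine havoid c (Set.mem_union_left _ (hsub (Set.mem_union_left _ hc))) ?_
        rw [he]; exact Set.mem_union_right _ rfl
      have hxψ : ∀ c : C, Sum.inr c ∈ ψ.consts → σ c ≠ x := by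
        intro c hc he
        refine havoid c (Set.mem_union_left _ (hsub (Set.mem_union_right _ hc))) ?_
        rw [he]; exact Set.mem_union_right _ rfl
      have hD := H σ (hinj.mono Set.subset_union_left)
        (fun c hc hv => havoid c (Set.mem_union_left _ hc)
          (Set.mem_union_left _ (Set.mem_union_left _ (Set.mem_union_left _ hv))))
      rw [Formula.projF_subst σ φ x t hxφ, Formula.projF_subst σ ψ x t hxψ]
      refine Derives.termInst hD ?_ ?_
      · refine Formula.projF_freeFor hff1 ?_ hxφ
        intro c hc hm
        exact havoid c (Set.mem_union_right _ hc)
          (Set.mem_union_left _ (Set.mem_union_left _ (Set.mem_union_right _ hm)))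
      · refine Formula.projF_freeFor hff2 ?_ hxψ
        intro c hc hm
        exact havoid c (Set.mem_union_right _ hc)
          (Set.mem_union_left _ (Set.mem_union_right _ hm))
  | @constGen φ ψ x c h hc1 hc2 ih =>
    obtain ⟨cs, V, hcsf, hVf, hsub, H⟩ := ih
    cases c with
    | inl c₀ =>
      refine ⟨cs ∪ φ.newC ∪ ψ.newC, V ∪ {x},
        (hcsf.union φ.newC_finite).union ψ.newC_finite,
        hVf.union (Set.finite_singleton x), ?_, ?_⟩
      · refine Set.union_subset ?_ ?_
        · exact fun c hc => Set.mem_union_left _ (Set.mem_union_right _ hc)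
        · exact fun c hc => Set.mem_union_right _ hc
      · intro σ hinj havoid
        have hxφ : ∀ c : C, Sum.inr c ∈ φ.consts → σ c ≠ x := by
          intro c hc he
          refine havoid c (Set.mem_union_left _ (Set.mem_union_right _ hc)) ?_
          rw [he]; exact Set.mem_union_right _ rfl
        have hxψ : ∀ c : C, Sum.inr c ∈ ψ.consts → σ c ≠ x := by
          intro c hc he
          refine havoid c (Set.mem_union_right _ hc) ?_
          rw [he]; exact Set.mem_union_right _ rfl
        have hD := H σ (hinj.mono (Set.subset_union_left.trans Set.subset_union_left))
          (fun c hc hv => havoid c (Set.mem_union_left _ (Set.mem_union_left _ hc))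
            (Set.mem_union_left _ hv))
        rw [Formula.projF_subst σ φ x _ hxφ, Formula.projF_subst σ ψ x _ hxψ] at hD
        exact Derives.constGen hD (fun hm => hc1 (Formula.projF_consts hm))
          (fun hm => hc2 (Formula.projF_consts hm))
    | inr c₁ =>
      refine ⟨cs ∪ φ.newC ∪ ψ.newC ∪ {c₁}, V ∪ φ.varsAll ∪ ψ.varsAll ∪ {x},
        ((hcsf.union φ.newC_finite).union ψ.newC_finite).union (Set.finite_singleton c₁),
        ((hVf.union φ.varsAll_finite).union ψ.varsAll_finite).union (Set.finite_singleton x),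
        ?_, ?_⟩
      · refine Set.union_subset ?_ ?_
        · exact fun c hc =>
            Set.mem_union_left _ (Set.mem_union_left _ (Set.mem_union_right _ hc))
        · exact fun c hc => Set.mem_union_left _ (Set.mem_union_right _ hc)
      · intro σ hinj havoid
        have hc₁cs : c₁ ∈ cs ∪ φ.newC ∪ ψ.newC ∪ {c₁} := Set.mem_union_right _ rfl
        have hxφ : ∀ c : C, Sum.inr c ∈ φ.consts → σ c ≠ x := by
          intro c hc he
          refine havoid c
            (Set.mem_union_left _ (Set.mem_union_left _ (Set.mem_union_right _ hc))) ?_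
          rw [he]; exact Set.mem_union_right _ rfl
        have hxψ : ∀ c : C, Sum.inr c ∈ ψ.consts → σ c ≠ x := by
          intro c hc he
          refine havoid c (Set.mem_union_left _ (Set.mem_union_right _ hc)) ?_
          rw [he]; exact Set.mem_union_right _ rfl
        have hD := H σ
          (hinj.mono ((Set.subset_union_left.trans Set.subset_union_left).trans
            Set.subset_union_left))
          (fun c hc hv => havoid c
            (Set.mem_union_left _ (Set.mem_union_left _ (Set.mem_union_left _ hc)))
            (Set.mem_union_left _ (Set.mem_union_left _ (Set.mem_union_left _ hv))))
        rw [Formula.projF_subst σ φ x _ hxφ, Formula.projF_subst σ ψ x _ hxψ] at hD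
        simp only [Term.projT] at hD
        -- hD : Derives ((φ.projF σ).subst x (.var (σ c₁))) ((ψ.projF σ).subst x (.var (σ c₁)))
        have hxy : x ≠ σ c₁ := by
          intro he
          refine havoid c₁ hc₁cs ?_
          rw [← he]; exact Set.mem_union_right _ rfl
        have hyφ : σ c₁ ∉ (φ.projF σ).varsAll := by
          intro hm
          rcases Formula.projF_varsAll hm with hm | ⟨c', hc', he⟩
          · exact havoid c₁ hc₁cs
              (Set.mem_union_left _ (Set.mem_union_left _ (Set.mem_union_right _ hm)))
          · have hce : c' = c₁ := hinj
              (Set.mem_union_left _ (Set.mem_union_left _ (Set.mem_union_right _ hc'))) hc₁cs he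
            exact hc1 (hce ▸ hc')
        have hyψ : σ c₁ ∉ (ψ.projF σ).varsAll := by
          intro hm
          rcases Formula.projF_varsAll hm with hm | ⟨c', hc', he⟩
          · exact havoid c₁ hc₁cs
              (Set.mem_union_left _ (Set.mem_union_right _ hm))
          · have hce : c' = c₁ := hinj
              (Set.mem_union_left _ (Set.mem_union_right _ hc')) hc₁cs he
            exact hc2 (hce ▸ hc')
        have hT := Derives.termInst hD (Formula.freeFor_roundtrip hyφ hxy)
          (Formula.freeFor_roundtrip hyψ hxy)
        rw [Formula.subst_roundtrip hyφ hxy, Formula.subst_roundtrip hyψ hxy] at hT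
        exact hT

end MainLemma
/-- If φ and ψ are formulas in the language of Σ and φ ⊢ ψ is derivable
in QRC₁ over the signature Σ extended by a collection C of new constants, then
φ ⊢ ψ is derivable in QRC₁ over Σ. -/
theorem qrc1_new_constants_conservative (Sig : Signature) (C : Type)
    (φ ψ : Formula Sig)
    (h : Derives (Formula.lift φ : Formula (Sig.extend C)) (Formula.lift ψ)) :
    Derives φ ψ := by
  classical
  obtain ⟨cs, V, hcsf, hVf, -, H⟩ := Derives.proj h
  obtain ⟨b, hb⟩ := hVf.bddAbove
  have hcnt : Countable ↥cs := hcsf.countable.to_subtype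
  obtain ⟨f, hf⟩ := exists_injective_nat ↥cs
  set σ : C → ℕ := fun c => if hc : c ∈ cs then b + 1 + f ⟨c, hc⟩ else 0 with hσ
  have hinj : Set.InjOn σ cs := by
    intro c1 h1 c2 h2 he
    simp only [hσ, dif_pos h1, dif_pos h2] at he
    have : f ⟨c1, h1⟩ = f ⟨c2, h2⟩ := by omega
    exact congrArg Subtype.val (hf this)
  have havoid : ∀ c ∈ cs, σ c ∉ V := by
    intro c hc hv
    have hle : σ c ≤ b := hb hv
    simp only [hσ, dif_pos hc] at hle
    omega
  have hfin := H σ hinj havoid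
  rwa [Formula.projF_lift, Formula.projF_lift] at hfin
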